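/- arXiv:2003.13126 — 4 statements merged into one kernel-verified Lean document; each statement's English description precedes it below -/
import Mathlib

section
/- Let (Ω, 𝓕, μ) be a probability space, X : Ω → ℝ and Z : Ω → ℝ^d Borel measurable random variables, and let F_{X|Z}(t|z) = (condDistrib X Z μ) z ((−∞, t]) be the conditional distribution function of X given Z = z, built from a regular conditional distribution. Assume that for (law of Z)-almost every z, the conditional law of X given Z = z is atomless (equivalently, t ↦ F_{X|Z}(t|z) is continuous). Define U₁(ω) = F_{X|Z}(X(ω) | Z(ω)). Then U₁ is uniformly distributed on [0,1] and U₁ is independent of Z. -/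
open MeasureTheory ProbabilityTheory

open Set

lemma pit_measure (ν : Measure ℝ) [IsProbabilityMeasure ν] (hν : ∀ x : ℝ, ν {x} = 0) :
    ν.map (fun x => (ν (Set.Iic x)).toReal) = volume.restrict (Set.Icc (0 : ℝ) 1) := by
  set F : ℝ → ℝ := fun x => (ν (Set.Iic x)).toReal with hF
  have hFmono : Monotone F := fun a b hab =>
    ENNReal.toReal_mono (measure_ne_top ν _) (measure_mono (Iic_subset_Iic.2 hab))
  have hFmeas : Measurable F := hFmono.measurable
  have hF0 : ∀ x, 0 ≤ F x := fun x => ENNReal.toReal_nonneg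
  have hF1 : ∀ x, F x ≤ 1 := fun x => by
    simpa [hF] using ENNReal.toReal_mono (by simp) (prob_le_one (μ := ν) (s := Iic x))
  have hFof : ∀ x, ν (Iic x) = ENNReal.ofReal (F x) := fun x => by
    simp [hF, ENNReal.ofReal_toReal (measure_ne_top ν _)]
  have key : ∀ u : ℝ, ν (F ⁻¹' Iic u) = ENNReal.ofReal (min u 1) := by
    intro u
    rcases lt_or_ge u 0 with hu | hu
    · have : F ⁻¹' Iic u = ∅ := by
        ext x; simp only [mem_preimage, mem_Iic, mem_empty_iff_false, iff_false, not_le]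
        exact lt_of_lt_of_le hu (hF0 x)
      rw [this]
      simp [ENNReal.ofReal_eq_zero.2 (le_of_lt (lt_of_le_of_lt (min_le_left u 1) hu))]
    rcases le_or_gt 1 u with hu1 | hu1
    · have : F ⁻¹' Iic u = univ := by
        ext x; simp only [mem_preimage, mem_Iic, mem_univ, iff_true]
        exact (hF1 x).trans hu1
      rw [this, min_eq_right hu1]
      simp
    · -- 0 ≤ u < 1
      rw [min_eq_left hu1.le]
      set S := F ⁻¹' Iic u with hS
      by_cases hne : S.Nonempty
      · -- bounded above
        obtain ⟨b, hb⟩ : ∃ b, u < F b := by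
          have htend : Filter.Tendsto (fun x => ν (Iic x)) Filter.atTop (nhds (ν univ)) :=
            tendsto_measure_Iic_atTop ν
          have htend' : Filter.Tendsto F Filter.atTop (nhds 1) := by
            have := (ENNReal.tendsto_toReal (by simp)).comp htend
            simpa [hF, measure_univ, Function.comp_def] using this
          have := htend'.eventually (eventually_gt_nhds hu1)
          exact this.exists
        have hbdd : BddAbove S := ⟨b, fun s hs => by
          by_contra hsb
          push_neg at hsb
          exact absurd (le_trans (hFmono hsb.le) hs) (not_le.2 hb)⟩
        set a := sSup S with ha
        -- every x < a is in S
        have hlow : ∀ x, x < a → x ∈ S := by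
          intro x hx
          obtain ⟨s, hsS, hxs⟩ := exists_lt_of_lt_csSup hne hx
          exact le_trans (hFmono hxs.le) hsS
        -- ν (Iio a) ≤ ofReal u
        have hIio : Iio a = ⋃ n : ℕ, Iic (a - 1 / (n + 1)) := by
          ext x
          simp only [mem_Iio, mem_iUnion, mem_Iic]
          constructor
          · intro hx
            obtain ⟨n, hn⟩ := exists_nat_one_div_lt (sub_pos.2 hx)
            exact ⟨n, by linarith⟩
          · rintro ⟨n, hn⟩
            have : (0:ℝ) < 1 / (n + 1) := by positivity
            linarith
        have hIioLe : ν (Iio a) ≤ ENNReal.ofReal u := by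
          rw [hIio, Directed.measure_iUnion
            (Monotone.directed_le (fun m n hmn => Iic_subset_Iic.2 (by
              have hc : (m:ℝ) ≤ n := Nat.cast_le.mpr hmn
              have : (1:ℝ) / (n + 1) ≤ 1 / (m + 1) :=
                one_div_le_one_div_of_le (by positivity) (by linarith)
              linarith)))]
          refine iSup_le fun n => ?_
          have hmem : a - 1 / (n + 1) ∈ S := hlow _ (by
            have : (0:ℝ) < 1 / (n + 1) := by positivity
            linarith)
          rw [hFof]
          exact ENNReal.ofReal_le_ofReal hmem
        have hIica : ν (Iic a) = ν (Iio a) :=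
          (measure_congr (Iio_ae_eq_Iic' (hν a))).symm
        have haS : a ∈ S := by
          have : ν (Iic a) ≤ ENNReal.ofReal u := hIica ▸ hIioLe
          have h2 : F a ≤ u := by
            rw [hFof] at this
            exact (ENNReal.ofReal_le_ofReal_iff hu).1 this
          exact h2
        have hSeq : S = Iic a := by
          apply subset_antisymm
          · exact fun s hs => le_csSup hbdd hs
          · exact fun x hx => le_trans (hFmono hx) haS
        -- lower bound: ofReal u ≤ ν (Iic a)
        have hge : ENNReal.ofReal u ≤ ν (Iic a) := by
          have hIicInter : Iic a = ⋂ n : ℕ, Iic (a + 1 / (n + 1)) := by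
            ext x
            simp only [mem_Iic, mem_iInter]
            constructor
            · intro hx n
              have : (0:ℝ) < 1 / (n + 1) := by positivity
              linarith
            · intro h
              by_contra hxa
              push_neg at hxa
              obtain ⟨n, hn⟩ := exists_nat_one_div_lt (sub_pos.2 hxa)
              linarith [h n]
          have htends : Filter.Tendsto (fun n : ℕ => ν (Iic (a + 1 / (n + 1))))
              Filter.atTop (nhds (ν (⋂ n : ℕ, Iic (a + 1 / (n + 1))))) := by
            refine tendsto_measure_iInter_atTop (fun n => (measurableSet_Iic).nullMeasurableSet)
              (fun m n hmn => Iic_subset_Iic.2 ?_) ⟨0, measure_ne_top ν _⟩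
            have hc : (m:ℝ) ≤ n := Nat.cast_le.mpr hmn
            have : (1:ℝ) / (n + 1) ≤ 1 / (m + 1) :=
              one_div_le_one_div_of_le (by positivity) (by linarith)
            linarith
          rw [hIicInter]
          refine ge_of_tendsto htends (Filter.Eventually.of_forall fun n => ?_)
          have hnot : a + 1 / (n + 1) ∉ S := by
            intro hmem
            have := le_csSup hbdd hmem
            have hpos : (0:ℝ) < 1 / (n + 1) := by positivity
            linarith
          have : u < F (a + 1 / (n + 1)) := lt_of_not_ge hnot
          rw [hFof]
          exact ENNReal.ofReal_le_ofReal this.le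
        rw [hSeq, hIica]
        exact le_antisymm hIioLe (hge.trans_eq hIica)
      · -- S empty: u must be 0
        rw [not_nonempty_iff_eq_empty] at hne
        rw [hne, measure_empty]
        have hu0 : u ≤ 0 := by
          by_contra h
          push_neg at h
          have hiempty : (⋂ n : ℕ, Iic (-(n:ℝ))) = (∅ : Set ℝ) := by
            ext x
            simp only [mem_iInter, mem_Iic, mem_empty_iff_false, iff_false, not_forall, not_le]
            obtain ⟨n, hn⟩ := exists_nat_gt (-x)
            exact ⟨n, by linarith⟩
          have htend : Filter.Tendsto (fun n : ℕ => ν (Iic (-(n:ℝ)))) Filter.atTop (nhds 0) := by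
            have := tendsto_measure_iInter_atTop (μ := ν)
              (fun n : ℕ => (measurableSet_Iic (a := -(n:ℝ))).nullMeasurableSet)
              (fun m n hmn => Iic_subset_Iic.2 (by
                have hc : (m:ℝ) ≤ n := Nat.cast_le.mpr hmn; linarith))
              ⟨0, measure_ne_top ν _⟩
            rwa [hiempty, measure_empty] at this
          have hev := htend.eventually (eventually_lt_nhds (ENNReal.ofReal_pos.2 h))
          obtain ⟨n, hn⟩ := hev.exists
          have hmem : (-(n:ℝ)) ∈ S := by
            have : F (-(n:ℝ)) ≤ u := by
              rw [hFof] at hn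
              have := (ENNReal.ofReal_lt_ofReal_iff h).1 hn
              linarith
            exact this
          exact absurd (hne ▸ hmem : (-(n:ℝ)) ∈ (∅ : Set ℝ)) (by simp)
        have : u = 0 := le_antisymm hu0 hu
        simp [this]
  refine Measure.ext_of_Iic _ _ fun u => ?_
  rw [Measure.map_apply hFmeas measurableSet_Iic, Measure.restrict_apply measurableSet_Iic]
  have : Iic u ∩ Icc (0:ℝ) 1 = Icc 0 (min u 1) := by
    ext x
    simp only [mem_inter_iff, mem_Iic, mem_Icc, le_min_iff]
    constructor
    · rintro ⟨h1, h2, h3⟩; exact ⟨h2, h1, h3⟩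
    · rintro ⟨h1, h2, h3⟩; exact ⟨h2, h1, h3⟩
  rw [key u, this, Real.volume_Icc]
  simp

/-- probability integral transform / Rosenblatt transform:
if `F_{X|Z}(t|z) = condDistrib X Z μ z (Iic t)` is the conditional distribution function
of `X` given `Z`, and the conditional law of `X` given `Z = z` is atomless for
`(μ.map Z)`-a.e. `z`, then `U₁ = F_{X|Z}(X|Z)` is uniformly distributed on `[0,1]`
and `U₁` is independent of `Z`. -/
theorem residual_uniform_and_indep {Ω : Type*} [MeasurableSpace Ω]
    (μ : Measure Ω) [IsProbabilityMeasure μ] {d : ℕ}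
    (X : Ω → ℝ) (Z : Ω → Fin d → ℝ) (hX : Measurable X) (hZ : Measurable Z)
    (hatomless : ∀ᵐ z ∂(μ.map Z), ∀ x : ℝ, (condDistrib X Z μ) z {x} = 0) :
    μ.map (fun ω => ((condDistrib X Z μ) (Z ω) (Set.Iic (X ω))).toReal) =
        MeasureTheory.volume.restrict (Set.Icc (0 : ℝ) 1) ∧
      IndepFun (fun ω => ((condDistrib X Z μ) (Z ω) (Set.Iic (X ω))).toReal) Z μ := by
  set κ := condDistrib X Z μ with hκdef
  set ρ := μ.map Z with hρdef
  haveI hρprob : IsProbabilityMeasure ρ := Measure.isProbabilityMeasure_map hZ.aemeasurable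
  have hpairmeas : Measurable (fun ω => (Z ω, X ω)) := hZ.prodMk hX
  haveI hjointprob : IsProbabilityMeasure (μ.map (fun ω => (Z ω, X ω))) :=
    Measure.isProbabilityMeasure_map hpairmeas.aemeasurable
  have hcomp : μ.map (fun ω => (Z ω, X ω)) = ρ ⊗ₘ κ := by
    have h := ((μ.map (fun ω => (Z ω, X ω))).disintegrate (μ.map (fun ω => (Z ω, X ω))).condKernel).symm
    rw [Measure.fst_map_prodMk₀ hX.aemeasurable] at h
    rw [hκdef, condDistrib_def]
    exact h
  -- measurability of the conditional CDF in both variables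
  have hgmeas0 : Measurable (fun p : (Fin d → ℝ) × ℝ => κ p.1 (Set.Iic p.2)) := by
    have ht : MeasurableSet {q : ((Fin d → ℝ) × ℝ) × ℝ | q.2 ≤ q.1.2} :=
      measurableSet_le measurable_snd measurable_fst.snd
    have h := Kernel.measurable_kernel_prodMk_left
      (κ := κ.comap Prod.fst measurable_fst) ht
    simpa [Kernel.comap_apply, Set.preimage, Set.Iic] using h
  set g : (Fin d → ℝ) × ℝ → ℝ := fun p => (κ p.1 (Set.Iic p.2)).toReal with hgdef
  have hg : Measurable g := hgmeas0.ennreal_toReal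
  have hfmeas : Measurable (fun p : (Fin d → ℝ) × ℝ => (g p, p.1)) :=
    hg.prodMk measurable_fst
  -- the joint law of (U₁, Z)
  have hJ : μ.map (fun ω => (g (Z ω, X ω), Z ω))
      = (volume.restrict (Set.Icc (0:ℝ) 1)).prod ρ := by
    have hmapmap : μ.map (fun ω => (g (Z ω, X ω), Z ω))
        = (μ.map (fun ω => (Z ω, X ω))).map (fun p => (g p, p.1)) := by
      rw [Measure.map_map hfmeas hpairmeas]
      rfl
    rw [hmapmap, hcomp]
    refine (Measure.prod_eq fun s t hs ht => ?_).symm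
    rw [Measure.map_apply hfmeas (hs.prod ht),
      Measure.compProd_apply (hfmeas (hs.prod ht))]
    have hind : (fun z => κ z (Prod.mk z ⁻¹' ((fun p => (g p, p.1)) ⁻¹' (s ×ˢ t))))
        = t.indicator (fun z => κ z ((fun x => g (z, x)) ⁻¹' s)) := by
      funext z
      by_cases hz : z ∈ t
      · simp only [Set.indicator_of_mem hz]
        congr 1
        ext x
        simp [hz]
      · simp only [Set.indicator_of_notMem hz]
        have : (Prod.mk z ⁻¹' ((fun p => (g p, p.1)) ⁻¹' (s ×ˢ t))) = ∅ := by
          ext x; simp [hz]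
        simp [this]
    rw [hind, lintegral_indicator ht]
    have hae : ∀ᵐ z ∂ρ, κ z ((fun x => g (z, x)) ⁻¹' s)
        = (volume.restrict (Set.Icc (0:ℝ) 1)) s := by
      filter_upwards [hatomless] with z hz
      have hpit := pit_measure (κ z) hz
      have hFz : Measurable (fun x : ℝ => (κ z (Set.Iic x)).toReal) := by
        refine Monotone.measurable fun a b hab => ?_
        exact ENNReal.toReal_mono (measure_ne_top _ _)
          (measure_mono (Set.Iic_subset_Iic.2 hab))
      rw [← hpit, Measure.map_apply hFz hs]
    rw [lintegral_congr_ae (ae_restrict_of_ae hae), setLIntegral_const, mul_comm]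
  have hUmeas : Measurable (fun ω => (κ (Z ω) (Set.Iic (X ω))).toReal) :=
    hg.comp hpairmeas
  have hmapU : μ.map (fun ω => (κ (Z ω) (Set.Iic (X ω))).toReal)
      = volume.restrict (Set.Icc (0:ℝ) 1) := by
    have hcompfst : (fun ω => (κ (Z ω) (Set.Iic (X ω))).toReal)
        = Prod.fst ∘ (fun ω => (g (Z ω, X ω), Z ω)) := rfl
    have hmeas2 : Measurable (fun ω => (g (Z ω, X ω), Z ω)) := (hg.comp hpairmeas).prodMk hZ
    rw [hcompfst, ← Measure.map_map measurable_fst hmeas2, hJ]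
    simp [Measure.map_fst_prod]
  refine ⟨hmapU, ?_⟩
  rw [indepFun_iff_map_prod_eq_prod_map_map hUmeas.aemeasurable hZ.aemeasurable,
    hmapU, ← hρdef, ← hJ]
end

section
/- Let (Ω, 𝓕, μ) be a probability space, X, Y : Ω → ℝ and Z : Ω → ℝ^d Borel measurable random variables, and let F_{X|Z}(t|z) = (condDistrib X Z μ) z ((−∞, t]) and F_{Y|Z}(t|z) = (condDistrib Y Z μ) z ((−∞, t]) be the conditional distribution functions of X given Z = z and of Y given Z = z. Assume that for (law of Z)-almost every z the conditional laws of X and of Y given Z = z are atomless. Define the nonparametric residuals U₁(ω) = F_{X|Z}(X(ω)|Z(ω)) and U₂(ω) = F_{Y|Z}(Y(ω)|Z(ω)). If X and Y are conditionally independent given Z, then U₁ and U₂ are independent. -/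
open MeasureTheory ProbabilityTheory Set Filter Topology

/-- Two probability measures on `ℝ × ℝ` agreeing on rational `Iic`-rectangles are equal. -/
lemma ext_prod_Iic_rat (μ ν : Measure (ℝ × ℝ)) [IsProbabilityMeasure μ] [IsProbabilityMeasure ν]
    (h : ∀ q r : ℚ, μ (Iic (q : ℝ) ×ˢ Iic (r : ℝ)) = ν (Iic (q : ℝ) ×ˢ Iic (r : ℝ))) : μ = ν := by
  have hC : IsCountablySpanning (⋃ a : ℚ, {Iic (a : ℝ)}) := by
    refine ⟨fun n => Iic ((n : ℚ) : ℝ), fun n => mem_iUnion.2 ⟨n, rfl⟩, ?_⟩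
    ext x
    simp only [mem_iUnion, mem_Iic, mem_univ, iff_true]
    obtain ⟨n, hn⟩ := exists_nat_gt x
    exact ⟨n, by push_cast; exact hn.le⟩
  have h1 : (inferInstance : MeasurableSpace ℝ) =
      MeasurableSpace.generateFrom (⋃ a : ℚ, {Iic (a : ℝ)}) := by
    rw [BorelSpace.measurable_eq (α := ℝ)]; exact Real.borel_eq_generateFrom_Iic_rat
  have hgen : (inferInstance : MeasurableSpace (ℝ × ℝ)) =
      MeasurableSpace.generateFrom
        (image2 (· ×ˢ ·) (⋃ a : ℚ, {Iic (a : ℝ)}) (⋃ a : ℚ, {Iic (a : ℝ)})) := by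
    have h2 := generateFrom_prod_eq hC hC
    rw [← h1] at h2
    exact h2
  refine ext_of_generate_finite _ hgen ?_ ?_ (by simp)
  · rintro s ⟨s₁, hs₁, s₂, hs₂, rfl⟩ t ⟨t₁, ht₁, t₂, ht₂, rfl⟩ -
    simp only [mem_iUnion, mem_singleton_iff] at hs₁ hs₂ ht₁ ht₂
    obtain ⟨q₁, rfl⟩ := hs₁; obtain ⟨q₂, rfl⟩ := hs₂
    obtain ⟨r₁, rfl⟩ := ht₁; obtain ⟨r₂, rfl⟩ := ht₂
    rw [prod_inter_prod, Iic_inter_Iic, Iic_inter_Iic]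
    exact mem_image2_of_mem (mem_iUnion.2 ⟨min q₁ r₁, by push_cast; rfl⟩)
      (mem_iUnion.2 ⟨min q₂ r₂, by push_cast; rfl⟩)
  · rintro s ⟨s₁, hs₁, s₂, hs₂, rfl⟩
    simp only [mem_iUnion, mem_singleton_iff] at hs₁ hs₂
    obtain ⟨q, rfl⟩ := hs₁; obtain ⟨r, rfl⟩ := hs₂
    exact h q r

lemma pit (ν : Measure ℝ) [IsProbabilityMeasure ν] (hν : ∀ x : ℝ, ν {x} = 0) (a : ℝ) :
    ν {x | (ν (Set.Iic x)).toReal ≤ a} = ENNReal.ofReal (min a 1) := by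
  have hfin : ∀ x : ℝ, ν (Iic x) ≠ ⊤ := fun x => measure_ne_top ν _
  rcases lt_or_ge a 0 with ha | ha
  · have hS : {x | (ν (Set.Iic x)).toReal ≤ a} = ∅ := by
      ext x
      simp only [mem_setOf_eq, mem_empty_iff_false, iff_false, not_le]
      exact lt_of_lt_of_le ha ENNReal.toReal_nonneg
    rw [hS, measure_empty, eq_comm, ENNReal.ofReal_eq_zero]
    exact (min_le_left _ _).trans ha.le
  rcases le_or_gt 1 a with ha1 | ha1
  · have hS : {x | (ν (Set.Iic x)).toReal ≤ a} = univ := by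
      refine eq_univ_of_forall fun x => ?_
      refine le_trans ?_ ha1
      have h1 : ν (Iic x) ≤ 1 := prob_le_one
      simpa using ENNReal.toReal_mono (by simp) h1
    rw [hS, measure_univ, min_eq_right ha1, ENNReal.ofReal_one]
  -- now `0 ≤ a < 1`
  have hSeq : {x | (ν (Set.Iic x)).toReal ≤ a} = {x | ν (Iic x) ≤ ENNReal.ofReal a} := by
    ext x
    exact (ENNReal.le_ofReal_iff_toReal_le (hfin x) ha).symm
  rw [hSeq]
  set S := {x | ν (Iic x) ≤ ENNReal.ofReal a} with hSdef
  rw [min_eq_left ha1.le]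
  have hoa : ENNReal.ofReal a < 1 := by
    rw [← ENNReal.ofReal_one]
    exact (ENNReal.ofReal_lt_ofReal_iff one_pos).mpr ha1
  have htop : Tendsto (fun x => ν (Iic x)) atTop (𝓝 1) := by
    simpa using tendsto_measure_Iic_atTop ν
  obtain ⟨y, hy⟩ : ∃ y, ENNReal.ofReal a < ν (Iic y) :=
    (htop.eventually (eventually_gt_nhds hoa)).exists
  have hSy : S ⊆ Iio y := by
    intro x hx
    by_contra hxy
    simp only [mem_Iio, not_lt] at hxy
    exact absurd (hy.trans_le (measure_mono (Iic_subset_Iic.mpr hxy))) (not_lt.mpr hx)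
  rcases S.eq_empty_or_nonempty with hne | hne
  · rw [hne, measure_empty, eq_comm, ENNReal.ofReal_eq_zero]
    by_contra hpos
    push_neg at hpos
    have h0 : (⨅ n : ℕ, ν (Iic (-(n : ℝ)))) = 0 := by
      rw [← Antitone.measure_iInter (fun n m hnm => Iic_subset_Iic.mpr
          (neg_le_neg (by exact_mod_cast hnm)))
        (fun n => measurableSet_Iic.nullMeasurableSet) ⟨0, measure_ne_top ν _⟩]
      have hempty : (⋂ n : ℕ, Iic (-(n : ℝ))) = ∅ := by
        ext x
        simp only [mem_iInter, mem_Iic, mem_empty_iff_false, iff_false, not_forall, not_le]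
        obtain ⟨n, hn⟩ := exists_nat_gt (-x)
        exact ⟨n, by linarith⟩
      rw [hempty, measure_empty]
    have hlt : (⨅ n : ℕ, ν (Iic (-(n : ℝ)))) < ENNReal.ofReal a := by
      rw [h0]; exact ENNReal.ofReal_pos.mpr hpos
    obtain ⟨n, hn⟩ := iInf_lt_iff.mp hlt
    have hmem : (-(n : ℝ)) ∈ S := hn.le
    rw [hne] at hmem
    exact hmem
  -- nonempty case
  · have hbdd : BddAbove S := ⟨y, fun x hx => (hSy hx).le⟩
    set c := sSup S with hc
    have hIio : Iio c ⊆ S := by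
      intro x hx
      obtain ⟨s, hsS, hxs⟩ := exists_lt_of_lt_csSup hne hx
      exact le_trans (measure_mono (Iic_subset_Iic.mpr hxs.le)) hsS
    have hsub : S ⊆ Iic c := fun x hx => le_csSup hbdd hx
    have hIicIio : ν (Iic c) = ν (Iio c) := by
      refine le_antisymm ?_ (measure_mono Iio_subset_Iic_self)
      calc ν (Iic c) = ν (Iio c ∪ {c}) := by rw [Iio_union_right]
        _ ≤ ν (Iio c) + ν {c} := measure_union_le _ _
        _ = ν (Iio c) := by rw [hν c, add_zero]
    have hνS : ν S = ν (Iic c) := by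
      refine le_antisymm (measure_mono hsub) ?_
      rw [hIicIio]
      exact measure_mono hIio
    rw [hνS]
    refine le_antisymm ?_ ?_
    · -- ν (Iic c) = ν (Iio c) ≤ ofReal a
      rw [hIicIio]
      have hunion : Iio c = ⋃ n : ℕ, Iic (c - ((n : ℝ) + 1)⁻¹) := by
        ext x
        simp only [mem_Iio, mem_iUnion, mem_Iic]
        constructor
        · intro hx
          obtain ⟨n, hn⟩ := exists_nat_gt (c - x)⁻¹
          refine ⟨n, ?_⟩
          have h1 : (0 : ℝ) < c - x := by linarith
          have h2 : (c - x)⁻¹ < (n : ℝ) + 1 := hn.trans (by linarith)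
          have h3 : ((n : ℝ) + 1)⁻¹ < c - x :=
            (inv_lt_comm₀ h1 (by positivity)).mp h2
          linarith
        · rintro ⟨n, hn⟩
          have : (0 : ℝ) < ((n : ℝ) + 1)⁻¹ := by positivity
          linarith
      rw [hunion, Monotone.measure_iUnion]
      · refine iSup_le fun n => ?_
        refine hIio ?_
        simp only [mem_Iio]
        have : (0 : ℝ) < ((n : ℝ) + 1)⁻¹ := by positivity
        linarith
      · intro n m hnm
        refine Iic_subset_Iic.mpr ?_
        have hc' := (Nat.cast_le (α := ℝ)).mpr hnm
        have : ((m : ℝ) + 1)⁻¹ ≤ ((n : ℝ) + 1)⁻¹ := by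
          apply inv_anti₀ (by positivity)
          linarith
        linarith
    · -- ofReal a ≤ ν (Iic c)
      have hinter : Iic c = ⋂ n : ℕ, Iic (c + ((n : ℝ) + 1)⁻¹) := by
        ext x
        simp only [mem_Iic, mem_iInter]
        constructor
        · intro hx n
          have : (0 : ℝ) < ((n : ℝ) + 1)⁻¹ := by positivity
          linarith
        · intro hx
          by_contra hcx
          push_neg at hcx
          obtain ⟨n, hn⟩ := exists_nat_gt (x - c)⁻¹
          have h1 : (0 : ℝ) < x - c := by linarith
          have h2 : (x - c)⁻¹ < (n : ℝ) + 1 := hn.trans (by linarith)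
          have h3 : ((n : ℝ) + 1)⁻¹ < x - c :=
            (inv_lt_comm₀ h1 (by positivity)).mp h2
          linarith [hx n]
      rw [hinter, Antitone.measure_iInter]
      · refine le_iInf fun n => ?_
        have hnot : c + ((n : ℝ) + 1)⁻¹ ∉ S := by
          intro hmem
          have := le_csSup hbdd hmem
          have hpos : (0 : ℝ) < ((n : ℝ) + 1)⁻¹ := by positivity
          linarith
        exact (not_le.mp hnot).le
      · intro n m hnm
        refine Iic_subset_Iic.mpr ?_
        have hc' := (Nat.cast_le (α := ℝ)).mpr hnm
        have : ((m : ℝ) + 1)⁻¹ ≤ ((n : ℝ) + 1)⁻¹ := by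
          apply inv_anti₀ (by positivity)
          linarith
        linarith
      · exact fun n => measurableSet_Iic.nullMeasurableSet
      · exact ⟨0, hfin _⟩

lemma measurable_kernel_iic {α : Type*} [MeasurableSpace α] (κ : Kernel α ℝ)
    [IsSFiniteKernel κ] : Measurable fun p : α × ℝ => κ p.1 (Iic p.2) := by
  have ht : MeasurableSet {p : (α × ℝ) × ℝ | p.2 ≤ p.1.2} :=
    measurableSet_le measurable_snd measurable_fst.snd
  have h := Kernel.measurable_kernel_prodMk_left
    (κ := κ.comap Prod.fst measurable_fst) ht
  exact h

lemma map_prod_eq_compProd {Ω β Ω' : Type*} [MeasurableSpace Ω] [MeasurableSpace β]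
    [MeasurableSpace Ω'] [StandardBorelSpace Ω'] [Nonempty Ω']
    (μ : Measure Ω) [IsProbabilityMeasure μ]
    (Z : Ω → β) (W : Ω → Ω') (hZ : Measurable Z) (hW : Measurable W) :
    μ.map (fun ω => (Z ω, W ω)) = (μ.map Z) ⊗ₘ condDistrib W Z μ := by
  haveI : IsProbabilityMeasure (μ.map (fun ω => (Z ω, W ω))) :=
    Measure.isProbabilityMeasure_map (hZ.prodMk hW).aemeasurable
  have h1 : (μ.map (fun ω => (Z ω, W ω))).fst = μ.map Z :=
    Measure.fst_map_prodMk₀ hW.aemeasurable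
  have h2 := Measure.disintegrate (μ.map (fun ω => (Z ω, W ω))) (μ.map (fun ω => (Z ω, W ω))).condKernel
  rw [h1] at h2
  rw [condDistrib]
  exact h2.symm

lemma condDistrib_prod_ae {Ω : Type*} [MeasurableSpace Ω] [StandardBorelSpace Ω] [Nonempty Ω]
    (μ : Measure Ω) [IsProbabilityMeasure μ] {d : ℕ}
    (X Y : Ω → ℝ) (Z : Ω → Fin d → ℝ)
    (hX : Measurable X) (hY : Measurable Y) (hZ : Measurable Z)
    (hCI : CondIndepFun (MeasurableSpace.comap Z inferInstance) hZ.comap_le X Y μ) :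
    ∀ᵐ z ∂(μ.map Z), condDistrib (fun ω => (X ω, Y ω)) Z μ z
      = (condDistrib X Z μ z).prod (condDistrib Y Z μ z) := by
  set κP := condDistrib (fun ω => (X ω, Y ω)) Z μ with hκP
  set κX := condDistrib X Z μ with hκX
  set κY := condDistrib Y Z μ with hκY
  have key : ∀ q r : ℚ, ∀ᵐ z ∂(μ.map Z),
      (κP z (Iic (q : ℝ) ×ˢ Iic (r : ℝ))).toReal
        = (κX z (Iic (q : ℝ))).toReal * (κY z (Iic (r : ℝ))).toReal := by
    intro q r
    rw [ae_map_iff hZ.aemeasurable]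
    swap
    · exact measurableSet_eq_fun
        ((Kernel.measurable_coe _ (measurableSet_Iic.prod measurableSet_Iic)).ennreal_toReal)
        (((Kernel.measurable_coe _ measurableSet_Iic).ennreal_toReal).mul
          ((Kernel.measurable_coe _ measurableSet_Iic).ennreal_toReal))
    have hP := condDistrib_ae_eq_condExp hZ (hX.prodMk hY)
      ((measurableSet_Iic (a := (q : ℝ))).prod (measurableSet_Iic (a := (r : ℝ)))) (μ := μ)
    have hXc := condDistrib_ae_eq_condExp hZ hX (measurableSet_Iic (a := (q : ℝ))) (μ := μ)
    have hYc := condDistrib_ae_eq_condExp hZ hY (measurableSet_Iic (a := (r : ℝ))) (μ := μ)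
    have hCIqr := (condIndepFun_iff_condExp_inter_preimage_eq_mul hX hY).mp hCI
      (Iic (q : ℝ)) (Iic (r : ℝ)) measurableSet_Iic measurableSet_Iic
    have hpre : (fun ω => (X ω, Y ω)) ⁻¹' (Iic (q : ℝ) ×ˢ Iic (r : ℝ))
        = X ⁻¹' Iic (q : ℝ) ∩ Y ⁻¹' Iic (r : ℝ) := Set.mk_preimage_prod X Y
    rw [hpre] at hP
    filter_upwards [hP, hXc, hYc, hCIqr] with ω h1 h2 h3 h4
    simp only [measureReal_def] at h1 h2 h3
    rw [h1, h4, ← h2, ← h3]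
  have key' : ∀ᵐ z ∂(μ.map Z), ∀ q r : ℚ,
      (κP z (Iic (q : ℝ) ×ˢ Iic (r : ℝ))).toReal
        = (κX z (Iic (q : ℝ))).toReal * (κY z (Iic (r : ℝ))).toReal := by
    rw [ae_all_iff]
    intro q
    rw [ae_all_iff]
    intro r
    exact key q r
  filter_upwards [key'] with z hz
  refine ext_prod_Iic_rat _ _ fun q r => ?_
  rw [Measure.prod_prod]
  rw [← ENNReal.toReal_eq_toReal_iff' (measure_ne_top _ _)
    (ENNReal.mul_ne_top (measure_ne_top _ _) (measure_ne_top _ _)), ENNReal.toReal_mul]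
  exact hz q r

/-- if `X` and `Y` are conditionally independent given `Z` (i.e. given the
σ-algebra generated by `Z`), and the conditional laws of `X` and of `Y` given `Z = z`
are atomless for `(μ.map Z)`-a.e. `z`, then the nonparametric residuals
`U₁ = F_{X|Z}(X|Z)` and `U₂ = F_{Y|Z}(Y|Z)` are independent. -/
theorem residuals_indep_of_condIndep {Ω : Type*} [MeasurableSpace Ω]
    [StandardBorelSpace Ω] [Nonempty Ω]
    (μ : Measure Ω) [IsProbabilityMeasure μ] {d : ℕ}
    (X Y : Ω → ℝ) (Z : Ω → Fin d → ℝ)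
    (hX : Measurable X) (hY : Measurable Y) (hZ : Measurable Z)
    (hatomlessX : ∀ᵐ z ∂(μ.map Z), ∀ x : ℝ, (condDistrib X Z μ) z {x} = 0)
    (hatomlessY : ∀ᵐ z ∂(μ.map Z), ∀ y : ℝ, (condDistrib Y Z μ) z {y} = 0)
    (hCI : CondIndepFun (MeasurableSpace.comap Z inferInstance) hZ.comap_le X Y μ) :
    IndepFun (fun ω => ((condDistrib X Z μ) (Z ω) (Set.Iic (X ω))).toReal)
      (fun ω => ((condDistrib Y Z μ) (Z ω) (Set.Iic (Y ω))).toReal) μ := by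
  set κX := condDistrib X Z μ with hκX
  set κY := condDistrib Y Z μ with hκY
  set κP := condDistrib (fun ω => (X ω, Y ω)) Z μ with hκP
  set U₁ : Ω → ℝ := fun ω => (κX (Z ω) (Iic (X ω))).toReal with hU₁
  set U₂ : Ω → ℝ := fun ω => (κY (Z ω) (Iic (Y ω))).toReal with hU₂
  haveI : IsProbabilityMeasure (μ.map Z) := Measure.isProbabilityMeasure_map hZ.aemeasurable
  have hU₁m : Measurable U₁ :=
    ((measurable_kernel_iic κX).comp (hZ.prodMk hX)).ennreal_toReal
  have hU₂m : Measurable U₂ :=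
    ((measurable_kernel_iic κY).comp (hZ.prodMk hY)).ennreal_toReal
  have hprod := condDistrib_prod_ae μ X Y Z hX hY hZ hCI
  have hmain : ∀ a b : ℝ, μ (U₁ ⁻¹' Iic a ∩ U₂ ⁻¹' Iic b)
      = ENNReal.ofReal (min a 1) * ENNReal.ofReal (min b 1) := by
    intro a b
    set T : Set ((Fin d → ℝ) × (ℝ × ℝ)) := {p | (κX p.1 (Iic p.2.1)).toReal ≤ a ∧
      (κY p.1 (Iic p.2.2)).toReal ≤ b} with hTdef
    have hT : MeasurableSet T := by
      apply MeasurableSet.inter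
      · exact measurableSet_le (((measurable_kernel_iic κX).comp
          (measurable_fst.prodMk measurable_snd.fst)).ennreal_toReal) measurable_const
      · exact measurableSet_le (((measurable_kernel_iic κY).comp
          (measurable_fst.prodMk measurable_snd.snd)).ennreal_toReal) measurable_const
    have hpre : U₁ ⁻¹' Iic a ∩ U₂ ⁻¹' Iic b = (fun ω => (Z ω, (X ω, Y ω))) ⁻¹' T := by
      ext ω
      simp [hTdef, hU₁, hU₂]
    rw [hpre, ← Measure.map_apply (hZ.prodMk (hX.prodMk hY)) hT,
      map_prod_eq_compProd μ Z (fun ω => (X ω, Y ω)) hZ (hX.prodMk hY),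
      Measure.compProd_apply hT]
    have hae : ∀ᵐ z ∂(μ.map Z), κP z (Prod.mk z ⁻¹' T)
        = ENNReal.ofReal (min a 1) * ENNReal.ofReal (min b 1) := by
      filter_upwards [hprod, hatomlessX, hatomlessY] with z h1 h2 h3
      have hset : Prod.mk z ⁻¹' T
          = {x | (κX z (Iic x)).toReal ≤ a} ×ˢ {y | (κY z (Iic y)).toReal ≤ b} := by
        ext p
        simp [hTdef, Set.mem_prod]
      rw [hset, h1, Measure.prod_prod, pit (κX z) h2 a, pit (κY z) h3 b]
    rw [lintegral_congr_ae hae, lintegral_const, measure_univ, mul_one]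
  have hle1 : ∀ ω, U₁ ω ≤ 1 := by
    intro ω
    have h : κX (Z ω) (Iic (X ω)) ≤ 1 := prob_le_one
    simpa [hU₁] using ENNReal.toReal_mono (by simp) h
  have hle2 : ∀ ω, U₂ ω ≤ 1 := by
    intro ω
    have h : κY (Z ω) (Iic (Y ω)) ≤ 1 := prob_le_one
    simpa [hU₂] using ENNReal.toReal_mono (by simp) h
  have hm1 : ∀ a : ℝ, μ (U₁ ⁻¹' Iic a) = ENNReal.ofReal (min a 1) := by
    intro a
    have h : U₁ ⁻¹' Iic a ∩ U₂ ⁻¹' Iic 1 = U₁ ⁻¹' Iic a :=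
      Set.inter_eq_left.mpr fun ω _ => hle2 ω
    rw [← h, hmain a 1]
    simp
  have hm2 : ∀ b : ℝ, μ (U₂ ⁻¹' Iic b) = ENNReal.ofReal (min b 1) := by
    intro b
    have h : U₁ ⁻¹' Iic 1 ∩ U₂ ⁻¹' Iic b = U₂ ⁻¹' Iic b :=
      Set.inter_eq_right.mpr fun ω _ => hle1 ω
    rw [← h, hmain 1 b]
    simp
  rw [indepFun_iff_map_prod_eq_prod_map_map hU₁m.aemeasurable hU₂m.aemeasurable]
  haveI : IsProbabilityMeasure (μ.map (fun ω => (U₁ ω, U₂ ω))) :=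
    Measure.isProbabilityMeasure_map (hU₁m.prodMk hU₂m).aemeasurable
  haveI : IsProbabilityMeasure (μ.map U₁) := Measure.isProbabilityMeasure_map hU₁m.aemeasurable
  haveI : IsProbabilityMeasure (μ.map U₂) := Measure.isProbabilityMeasure_map hU₂m.aemeasurable
  refine ext_prod_Iic_rat _ _ fun q r => ?_
  rw [Measure.map_apply (hU₁m.prodMk hU₂m) (measurableSet_Iic.prod measurableSet_Iic),
    Measure.prod_prod, Measure.map_apply hU₁m measurableSet_Iic,
    Measure.map_apply hU₂m measurableSet_Iic, Set.mk_preimage_prod,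
    hmain ((q : ℝ)) ((r : ℝ)), hm1 ((q : ℝ)), hm2 ((r : ℝ))]
end

section
/- Let (Ω, 𝓕, μ) be a probability space, X, Y : Ω → ℝ and Z : Ω → ℝ^d Borel measurable, with F_{X|Z}(t|z) = (condDistrib X Z μ) z ((−∞, t]) and U₁(ω) = F_{X|Z}(X(ω)|Z(ω)). Assume that for (law of Z)-almost every z the conditional law of X given Z = z is atomless, and that X and Y are conditionally independent given Z. Let φ : [0,1] → ℝ be bounded measurable with ∫₀¹ φ(u) du = 0. Then for every bounded measurable g : ℝ × ℝ^d → ℝ, E[φ(U₁)·g(Y, Z)] = 0; equivalently, the conditional expectation of φ(U₁) given the σ-algebra generated by (Y, Z) is 0 almost surely. -/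
open MeasureTheory ProbabilityTheory Set
open scoped ENNReal

lemma pit_map_eq (ν : Measure ℝ) [IsProbabilityMeasure ν] (hν : ∀ x : ℝ, ν {x} = 0) :
    ν.map (fun x => (ν (Set.Iic x)).toReal) = volume.restrict (Set.Icc (0:ℝ) 1) := by
  have hmono : Monotone fun x => (ν (Iic x)).toReal := fun a b hab =>
    ENNReal.toReal_mono (measure_ne_top _ _) (measure_mono (Iic_subset_Iic.mpr hab))
  have hFmeas : Measurable fun x => (ν (Iic x)).toReal := hmono.measurable
  refine Measure.ext_of_Iic _ _ fun t => ?_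
  rw [Measure.map_apply hFmeas measurableSet_Iic, Measure.restrict_apply measurableSet_Iic]
  rcases lt_or_ge t 0 with ht | ht
  · have h1 : (fun x => (ν (Iic x)).toReal) ⁻¹' Iic t = ∅ := by
      ext x
      simp only [mem_preimage, mem_Iic, mem_empty_iff_false, iff_false, not_le]
      exact lt_of_lt_of_le ht ENNReal.toReal_nonneg
    have h2 : Iic t ∩ Icc (0:ℝ) 1 = ∅ := by
      ext x
      simp only [mem_inter_iff, mem_Iic, mem_Icc, mem_empty_iff_false, iff_false, not_and]
      intro hx h0 _
      linarith
    rw [h1, h2]; simp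
  rcases le_or_gt 1 t with ht1 | ht1
  · have h1 : (fun x => (ν (Iic x)).toReal) ⁻¹' Iic t = univ := by
      ext x
      simp only [mem_preimage, mem_Iic, mem_univ, iff_true]
      refine le_trans ?_ ht1
      calc (ν (Iic x)).toReal ≤ (1 : ℝ≥0∞).toReal :=
            ENNReal.toReal_mono (by simp) (prob_le_one (μ := ν) (s := Iic x))
        _ = 1 := by simp
    have h2 : Iic t ∩ Icc (0:ℝ) 1 = Icc 0 1 := by
      ext x
      simp only [mem_inter_iff, mem_Iic, mem_Icc]
      constructor
      · rintro ⟨_, h⟩; exact h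
      · rintro ⟨h0, h1'⟩; exact ⟨le_trans h1' ht1, h0, h1'⟩
    rw [h1, h2, Real.volume_Icc, measure_univ]
    norm_num
  · -- 0 ≤ t < 1
    set S := (fun x => (ν (Iic x)).toReal) ⁻¹' Iic t with hSdef
    have hS_iff : ∀ x, x ∈ S ↔ ν (Iic x) ≤ ENNReal.ofReal t := fun x =>
      (ENNReal.le_ofReal_iff_toReal_le (measure_ne_top _ _) ht).symm
    have h2 : Iic t ∩ Icc (0:ℝ) 1 = Icc 0 t := by
      ext x
      simp only [mem_inter_iff, mem_Iic, mem_Icc]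
      constructor
      · rintro ⟨hxt, h0, _⟩; exact ⟨h0, hxt⟩
      · rintro ⟨h0, hxt⟩; exact ⟨hxt, h0, by linarith⟩
    rw [h2, Real.volume_Icc, sub_zero]
    rcases eq_empty_or_nonempty S with hS | hne
    · rw [hS]
      have ht0 : t = 0 := by
        by_contra ht0
        have htpos : 0 < t := lt_of_le_of_ne ht (Ne.symm ht0)
        have hInter : ⋂ n : ℕ, Iic (-(n:ℝ)) = ∅ := by
          ext y
          simp only [mem_iInter, mem_Iic, mem_empty_iff_false, iff_false, not_forall, not_le]
          obtain ⟨n, hn⟩ := exists_nat_gt (-y)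
          exact ⟨n, by linarith⟩
        have hanti : Antitone fun n : ℕ => Iic (-(n:ℝ)) := by
          intro a b hab
          exact Iic_subset_Iic.mpr (by exact_mod_cast neg_le_neg (by exact_mod_cast hab))
        have h0 : ν (⋂ n : ℕ, Iic (-(n:ℝ))) = ⨅ n : ℕ, ν (Iic (-(n:ℝ))) :=
          hanti.measure_iInter (fun n => nullMeasurableSet_Iic) ⟨0, measure_ne_top _ _⟩
        rw [hInter, measure_empty] at h0
        have hlt : ⨅ n : ℕ, ν (Iic (-(n:ℝ))) < ENNReal.ofReal t := by
          rw [← h0]; exact ENNReal.ofReal_pos.mpr htpos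
        obtain ⟨n, hn⟩ := iInf_lt_iff.mp hlt
        have : (-(n:ℝ)) ∈ S := (hS_iff _).mpr hn.le
        rw [hS] at this
        exact this
      simp [ht0]
    · -- S nonempty
      have hbdd : BddAbove S := by
        have hUn : ⋃ n : ℕ, Iic ((n:ℝ)) = univ := by
          ext y
          simp only [mem_iUnion, mem_Iic, mem_univ, iff_true]
          obtain ⟨n, hn⟩ := exists_nat_gt y
          exact ⟨n, hn.le⟩
        have hmonoU : Monotone fun n : ℕ => Iic ((n:ℝ)) := fun a b hab =>
          Iic_subset_Iic.mpr (by exact_mod_cast hab)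
        have hsup : ⨆ n : ℕ, ν (Iic ((n:ℝ))) = 1 := by
          rw [← hmonoU.measure_iUnion, hUn, measure_univ]
        have hlt1 : ENNReal.ofReal t < ⨆ n : ℕ, ν (Iic ((n:ℝ))) := by
          rw [hsup]; exact ENNReal.ofReal_lt_one.mpr ht1
        obtain ⟨n, hn⟩ := lt_iSup_iff.mp hlt1
        refine ⟨(n:ℝ), fun x hx => ?_⟩
        by_contra hxn
        push_neg at hxn
        have : ν (Iic ((n:ℝ))) ≤ ν (Iic x) := measure_mono (Iic_subset_Iic.mpr hxn.le)
        exact absurd (le_trans this ((hS_iff x).mp hx)) (not_le.mpr hn)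
      set c := sSup S with hc
      have hIio_sub : Iio c ⊆ S := by
        intro y hy
        obtain ⟨x, hxS, hyx⟩ := exists_lt_of_lt_csSup hne hy
        exact (hS_iff y).mpr
          (le_trans (measure_mono (Iic_subset_Iic.mpr hyx.le)) ((hS_iff x).mp hxS))
      have hS_sub : S ⊆ Iic c := fun x hx => le_csSup hbdd hx
      have hIicIio : ν (Iic c) = ν (Iio c) := by
        apply le_antisymm
        · calc ν (Iic c) = ν (Iio c ∪ {c}) := by rw [Iio_union_right]
            _ ≤ ν (Iio c) + ν {c} := measure_union_le _ _
            _ = ν (Iio c) := by rw [hν c, add_zero]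
        · exact measure_mono Iio_subset_Iic_self
      have hup : ν (Iio c) ≤ ENNReal.ofReal t := by
        have hUn : Iio c = ⋃ n : ℕ, Iic (c - 1/(n+1)) := by
          ext y
          simp only [mem_Iio, mem_iUnion, mem_Iic]
          constructor
          · intro hy
            obtain ⟨n, hn⟩ := exists_nat_one_div_lt (sub_pos.mpr hy)
            exact ⟨n, by push_cast at hn ⊢; linarith⟩
          · rintro ⟨n, hn⟩
            have hp : (0:ℝ) < 1/(n+1) := by positivity
            linarith
        have hmonoU : Monotone fun n : ℕ => Iic (c - 1/((n:ℝ)+1)) := by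
          intro a b hab
          apply Iic_subset_Iic.mpr
          have h1 : (1:ℝ)/((b:ℝ)+1) ≤ 1/((a:ℝ)+1) := by
            apply one_div_le_one_div_of_le
            · positivity
            · exact_mod_cast by omega
          linarith
        rw [hUn, hmonoU.measure_iUnion]
        refine iSup_le fun n => (hS_iff _).mp (hIio_sub ?_)
        simp only [mem_Iio]
        have hp : (0:ℝ) < 1/((n:ℝ)+1) := by positivity
        linarith
      have hlow : ENNReal.ofReal t ≤ ν (Iic c) := by
        have hIn : Iic c = ⋂ n : ℕ, Iic (c + 1/((n:ℝ)+1)) := by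
          ext y
          simp only [mem_Iic, mem_iInter]
          constructor
          · intro hy n
            have hp : (0:ℝ) < 1/((n:ℝ)+1) := by positivity
            linarith
          · intro hy
            by_contra hlt
            push_neg at hlt
            obtain ⟨n, hn⟩ := exists_nat_one_div_lt (sub_pos.mpr hlt)
            have := hy n
            push_cast at hn
            linarith
        have hanti : Antitone fun n : ℕ => Iic (c + 1/((n:ℝ)+1)) := by
          intro a b hab
          apply Iic_subset_Iic.mpr
          have h1 : (1:ℝ)/((b:ℝ)+1) ≤ 1/((a:ℝ)+1) := by
            apply one_div_le_one_div_of_le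
            · positivity
            · exact_mod_cast by omega
          linarith
        rw [hIn, hanti.measure_iInter (fun n => nullMeasurableSet_Iic) ⟨0, measure_ne_top _ _⟩]
        refine le_iInf fun n => ?_
        have hnotS : c + 1/((n:ℝ)+1) ∉ S := by
          intro h
          have hle := le_csSup hbdd h
          have hp : (0:ℝ) < 1/((n:ℝ)+1) := by positivity
          rw [← hc] at hle
          linarith
        exact le_of_lt (not_le.mp fun hh => hnotS ((hS_iff _).mpr hh))
      refine le_antisymm ?_ ?_
      · exact le_trans (measure_mono hS_sub) (hIicIio ▸ hup)
      · exact le_trans (le_trans hlow (le_of_eq hIicIio)) (measure_mono hIio_sub)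

lemma pit_integral (ν : Measure ℝ) [IsProbabilityMeasure ν] (hν : ∀ x : ℝ, ν {x} = 0)
    (φ : ℝ → ℝ) (hφ : Measurable φ) :
    ∫ x, φ ((ν (Set.Iic x)).toReal) ∂ν = ∫ u in Set.Icc (0:ℝ) 1, φ u := by
  have hmono : Monotone fun x => (ν (Iic x)).toReal := fun a b hab =>
    ENNReal.toReal_mono (measure_ne_top _ _) (measure_mono (Iic_subset_Iic.mpr hab))
  rw [show (∫ u in Set.Icc (0:ℝ) 1, φ u) = ∫ u, φ u ∂(volume.restrict (Set.Icc (0:ℝ) 1)) from rfl,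
    ← pit_map_eq ν hν, integral_map hmono.measurable.aemeasurable hφ.aestronglyMeasurable]

lemma measurable_kernel_cdf {β : Type*} [MeasurableSpace β] (κ : ProbabilityTheory.Kernel β ℝ)
    [ProbabilityTheory.IsSFiniteKernel κ] :
    Measurable fun p : β × ℝ => κ p.1 (Set.Iic p.2) := by
  have ht : MeasurableSet {q : (β × ℝ) × ℝ | q.2 ≤ q.1.2} :=
    measurableSet_le measurable_snd measurable_fst.snd
  have h := ProbabilityTheory.Kernel.measurable_kernel_prodMk_left
    (κ := κ.comap Prod.fst measurable_fst) ht
  simp only [Kernel.comap_apply, Set.preimage_setOf_eq] at h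
  exact h

/-- if `X ⫫ Y | Z`, the conditional law of `X` given `Z = z` is a.e.
atomless, and `φ` is bounded measurable with `∫₀¹ φ = 0`, then for every bounded
measurable `g`, `E[φ(U₁)·g(Y, Z)] = 0`; equivalently `E[φ(U₁) | σ(Y, Z)] = 0` a.s.,
where `U₁ = F_{X|Z}(X|Z)` is the nonparametric residual. -/
theorem residual_orthogonal_of_condIndep {Ω : Type*} [MeasurableSpace Ω]
    [StandardBorelSpace Ω] [Nonempty Ω]
    (μ : Measure Ω) [IsProbabilityMeasure μ] {d : ℕ}
    (X Y : Ω → ℝ) (Z : Ω → Fin d → ℝ)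
    (hX : Measurable X) (hY : Measurable Y) (hZ : Measurable Z)
    (hatomless : ∀ᵐ z ∂(μ.map Z), ∀ x : ℝ, (condDistrib X Z μ) z {x} = 0)
    (hCI : CondIndepFun (MeasurableSpace.comap Z inferInstance) hZ.comap_le X Y μ)
    (φ : ℝ → ℝ) (hφmeas : Measurable φ) (hφbdd : ∃ C : ℝ, ∀ u : ℝ, |φ u| ≤ C)
    (hφmean : ∫ u in Set.Icc (0 : ℝ) 1, φ u = 0) :
    (∀ g : ℝ × (Fin d → ℝ) → ℝ, Measurable g → (∃ C : ℝ, ∀ p, |g p| ≤ C) →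
      ∫ ω, φ (((condDistrib X Z μ) (Z ω) (Set.Iic (X ω))).toReal) * g (Y ω, Z ω) ∂μ = 0) ∧
    μ[fun ω => φ (((condDistrib X Z μ) (Z ω) (Set.Iic (X ω))).toReal) |
        MeasurableSpace.comap (fun ω => (Y ω, Z ω)) inferInstance] =ᵐ[μ] 0 := by
  classical
  have hWmeas : Measurable (fun ω => (X ω, Y ω)) := hX.prodMk hY
  haveI : IsProbabilityMeasure (μ.map Z) := Measure.isProbabilityMeasure_map hZ.aemeasurable
  -- rectangle factorization, fixed sets
  have h1 : ∀ (A B : Set ℝ), MeasurableSet A → MeasurableSet B →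
      ∀ᵐ ω ∂μ, condDistrib (fun ω => (X ω, Y ω)) Z μ (Z ω) (A ×ˢ B)
        = condDistrib X Z μ (Z ω) A * condDistrib Y Z μ (Z ω) B := by
    intro A B hA hB
    have e1 := condDistrib_ae_eq_condExp (μ := μ) hZ hWmeas (hA.prod hB)
    have e2 := condDistrib_ae_eq_condExp (μ := μ) hZ hX hA
    have e3 := condDistrib_ae_eq_condExp (μ := μ) hZ hY hB
    have e4 := (condIndepFun_iff_condExp_inter_preimage_eq_mul hX hY).mp hCI A B hA hB
    rw [Set.mk_preimage_prod] at e1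
    filter_upwards [e1, e2, e3, e4] with ω q1 q2 q3 q4
    simp only [measureReal_def] at q1 q2 q3
    have hq : (condDistrib (fun ω => (X ω, Y ω)) Z μ (Z ω) (A ×ˢ B)).toReal
        = ((condDistrib X Z μ (Z ω) A) * (condDistrib Y Z μ (Z ω) B)).toReal := by
      rw [ENNReal.toReal_mul, q1, q4, ← q2, ← q3]
    exact (ENNReal.toReal_eq_toReal_iff' (measure_ne_top _ _)
      (ENNReal.mul_ne_top (measure_ne_top _ _) (measure_ne_top _ _))).mp hq
  have h2 : ∀ᵐ ω ∂μ, ∀ q r : ℚ,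
      condDistrib (fun ω => (X ω, Y ω)) Z μ (Z ω) (Set.Iic (q:ℝ) ×ˢ Set.Iic (r:ℝ))
        = condDistrib X Z μ (Z ω) (Set.Iic (q:ℝ)) * condDistrib Y Z μ (Z ω) (Set.Iic (r:ℝ)) := by
    rw [MeasureTheory.ae_all_iff]
    intro q
    rw [MeasureTheory.ae_all_iff]
    intro r
    exact h1 _ _ measurableSet_Iic measurableSet_Iic
  have hPmeas : MeasurableSet {z : Fin d → ℝ | ∀ q r : ℚ,
      condDistrib (fun ω => (X ω, Y ω)) Z μ z (Set.Iic (q:ℝ) ×ˢ Set.Iic (r:ℝ))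
        = condDistrib X Z μ z (Set.Iic (q:ℝ)) * condDistrib Y Z μ z (Set.Iic (r:ℝ))} := by
    rw [Set.setOf_forall]
    refine MeasurableSet.iInter fun q => ?_
    rw [Set.setOf_forall]
    refine MeasurableSet.iInter fun r => ?_
    exact measurableSet_eq_fun
      (Kernel.measurable_coe _ (measurableSet_Iic.prod measurableSet_Iic))
      ((Kernel.measurable_coe _ measurableSet_Iic).mul
        (Kernel.measurable_coe _ measurableSet_Iic))
  have h3 : ∀ᵐ z ∂(μ.map Z), ∀ q r : ℚ,
      condDistrib (fun ω => (X ω, Y ω)) Z μ z (Set.Iic (q:ℝ) ×ˢ Set.Iic (r:ℝ))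
        = condDistrib X Z μ z (Set.Iic (q:ℝ)) * condDistrib Y Z μ z (Set.Iic (r:ℝ)) :=
    (MeasureTheory.ae_map_iff hZ.aemeasurable hPmeas).mpr h2
  -- factorization of the joint conditional law
  have hfac : ∀ᵐ z ∂(μ.map Z), condDistrib (fun ω => (X ω, Y ω)) Z μ z
      = (condDistrib X Z μ z).prod (condDistrib Y Z μ z) := by
    have hspan : IsCountablySpanning (⋃ q : ℚ, {Set.Iic (q:ℝ)}) := by
      refine ⟨fun n => Set.Iic ((n:ℚ):ℝ), fun n => Set.mem_iUnion.mpr ⟨n, rfl⟩, ?_⟩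
      ext x
      simp only [Set.mem_iUnion, Set.mem_Iic, Set.mem_univ, iff_true]
      obtain ⟨n, hn⟩ := exists_nat_gt x
      exact ⟨n, by exact_mod_cast hn.le⟩
    have hgen : (inferInstance : MeasurableSpace (ℝ × ℝ)) =
        MeasurableSpace.generateFrom
          (Set.image2 (· ×ˢ ·) (⋃ q : ℚ, {Set.Iic (q:ℝ)}) (⋃ q : ℚ, {Set.Iic (q:ℝ)})) := by
      rw [← generateFrom_prod_eq hspan hspan]
      show Prod.instMeasurableSpace = _
      unfold Prod.instMeasurableSpace
      rw [BorelSpace.measurable_eq (α := ℝ), Real.borel_eq_generateFrom_Iic_rat]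
    filter_upwards [h3] with z hz
    refine MeasureTheory.ext_of_generate_finite _ hgen
      (Real.isPiSystem_Iic_rat.prod Real.isPiSystem_Iic_rat) ?_ ?_
    · rintro s ⟨a, ha, b, hb, rfl⟩
      simp only [Set.mem_iUnion, Set.mem_singleton_iff] at ha hb
      obtain ⟨q, rfl⟩ := ha
      obtain ⟨r, rfl⟩ := hb
      rw [Measure.prod_prod]
      exact hz q r
    · simp
  -- PIT
  have hpit : ∀ᵐ z ∂(μ.map Z), ∫ x, φ ((condDistrib X Z μ z (Set.Iic x)).toReal)
      ∂(condDistrib X Z μ z) = 0 := by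
    filter_upwards [hatomless] with z hz
    rw [pit_integral (condDistrib X Z μ z) hz φ hφmeas, hφmean]
  obtain ⟨Cφ, hCφ⟩ := hφbdd
  have hmeasK : Measurable fun p : (Fin d → ℝ) × ℝ =>
      (condDistrib X Z μ p.1 (Set.Iic p.2)).toReal :=
    (measurable_kernel_cdf (condDistrib X Z μ)).ennreal_toReal
  have hhmeas : Measurable fun ω => φ ((condDistrib X Z μ (Z ω) (Set.Iic (X ω))).toReal) :=
    hφmeas.comp (hmeasK.comp (hZ.prodMk hX))
  have hmapW : μ.map (fun ω => (Z ω, (X ω, Y ω)))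
      = (μ.map Z) ⊗ₘ condDistrib (fun ω => (X ω, Y ω)) Z μ := by
    have hh := Measure.disintegrate (μ.map (fun ω => (Z ω, (X ω, Y ω)))) (μ.map (fun ω => (Z ω, (X ω, Y ω)))).condKernel
    rw [Measure.fst_map_prodMk hWmeas] at hh
    rw [condDistrib]
    exact hh.symm
  have part1 : ∀ g : ℝ × (Fin d → ℝ) → ℝ, Measurable g → (∃ C : ℝ, ∀ p, |g p| ≤ C) →
      ∫ ω, φ (((condDistrib X Z μ) (Z ω) (Set.Iic (X ω))).toReal) * g (Y ω, Z ω) ∂μ = 0 := by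
    intro g hg hgbdd
    obtain ⟨Cg, hCg⟩ := hgbdd
    set G : (Fin d → ℝ) × (ℝ × ℝ) → ℝ :=
      fun p => φ ((condDistrib X Z μ p.1 (Set.Iic p.2.1)).toReal) * g (p.2.2, p.1) with hG
    have hGmeas : Measurable G :=
      (hφmeas.comp (hmeasK.comp (measurable_fst.prodMk measurable_snd.fst))).mul
        (hg.comp (measurable_snd.snd.prodMk measurable_fst))
    have hGbdd : ∀ p, ‖G p‖ ≤ |Cφ| * |Cg| := by
      intro p
      rw [hG, Real.norm_eq_abs]
      calc |φ ((condDistrib X Z μ p.1 (Set.Iic p.2.1)).toReal) * g (p.2.2, p.1)|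
          = |φ ((condDistrib X Z μ p.1 (Set.Iic p.2.1)).toReal)| * |g (p.2.2, p.1)| := abs_mul _ _
        _ ≤ |Cφ| * |Cg| := mul_le_mul ((hCφ _).trans (le_abs_self _))
            ((hCg _).trans (le_abs_self _)) (abs_nonneg _) (abs_nonneg _)
    have hGint : Integrable G ((μ.map Z) ⊗ₘ condDistrib (fun ω => (X ω, Y ω)) Z μ) :=
      (integrable_const (|Cφ| * |Cg|)).mono' hGmeas.aestronglyMeasurable
        (Filter.Eventually.of_forall hGbdd)
    have step1 : ∫ ω, φ ((condDistrib X Z μ (Z ω) (Set.Iic (X ω))).toReal) * g (Y ω, Z ω) ∂μ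
        = ∫ p, G p ∂((μ.map Z) ⊗ₘ condDistrib (fun ω => (X ω, Y ω)) Z μ) := by
      rw [← hmapW, integral_map (hZ.prodMk hWmeas).aemeasurable hGmeas.aestronglyMeasurable]
    rw [step1, Measure.integral_compProd hGint]
    have step2 : ∀ᵐ z ∂(μ.map Z),
        ∫ q, G (z, q) ∂(condDistrib (fun ω => (X ω, Y ω)) Z μ z) = 0 := by
      filter_upwards [hfac, hpit] with z hz hz0
      rw [hz]
      have hmul : ∫ q, G (z, q) ∂((condDistrib X Z μ z).prod (condDistrib Y Z μ z))
          = (∫ x, φ ((condDistrib X Z μ z (Set.Iic x)).toReal) ∂(condDistrib X Z μ z))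
            * ∫ y, g (y, z) ∂(condDistrib Y Z μ z) :=
        integral_prod_mul (f := fun x => φ ((condDistrib X Z μ z (Set.Iic x)).toReal))
          (g := fun y => g (y, z))
      rw [hmul, hz0, zero_mul]
    rw [integral_congr_ae step2, integral_zero]
  refine ⟨part1, ?_⟩
  have hm' : MeasurableSpace.comap (fun ω => (Y ω, Z ω)) inferInstance ≤ _ :=
    (hY.prodMk hZ).comap_le
  have hh_int : Integrable (fun ω => φ ((condDistrib X Z μ (Z ω) (Set.Iic (X ω))).toReal)) μ :=
    (integrable_const |Cφ|).mono' hhmeas.aestronglyMeasurable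
      (Filter.Eventually.of_forall fun ω => (hCφ _).trans (le_abs_self _))
  have h0 : (fun _ : Ω => (0:ℝ)) =ᵐ[μ]
      μ[fun ω => φ ((condDistrib X Z μ (Z ω) (Set.Iic (X ω))).toReal) |
        MeasurableSpace.comap (fun ω => (Y ω, Z ω)) inferInstance] := by
    refine ae_eq_condExp_of_forall_setIntegral_eq hm' hh_int
      (fun s _ _ => (integrable_zero _ _ _).integrableOn) (fun s hs _ => ?_)
      (StronglyMeasurable.aestronglyMeasurable stronglyMeasurable_zero)
    obtain ⟨t, ht, rfl⟩ := hs
    have hind := part1 (t.indicator fun _ => (1:ℝ)) (measurable_const.indicator ht)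
      ⟨1, fun p => by
        by_cases hp : p ∈ t <;>
          simp [Set.indicator_of_mem, Set.indicator_of_notMem, hp]⟩
    rw [integral_zero]
    rw [← integral_indicator ((hY.prodMk hZ) ht)]
    rw [← hind]
    congr 1
    funext ω
    by_cases hp : (Y ω, Z ω) ∈ t
    · simp [Set.indicator_of_mem, hp, Set.mem_preimage]
    · simp [Set.indicator_of_notMem, hp, Set.mem_preimage]
  exact h0.symm
end

section
/- (Uniform Slutsky lemma.) Let ι be an index set and for each i ∈ ι let (Ω_i, 𝓕_i, P_i) be a probability space carrying real random variables X_n^i, Y_n^i (n ∈ ℕ) and X^i. Suppose (i) X_n converges uniformly in distribution to X over the family, in the sense that for every bounded Lipschitz continuous f : ℝ → ℝ, sup_{i ∈ ι} |E_{P_i} f(X_n^i) − E_{P_i} f(X^i)| → 0 as n → ∞; and (ii) Y_n converges to 0 in probability uniformly over the family: for every ε > 0, sup_{i ∈ ι} P_i(|Y_n^i| > ε) → 0. Then X_n + Y_n converges uniformly in distribution to X over the family: for every bounded Lipschitz continuous f : ℝ → ℝ, sup_{i ∈ ι} |E_{P_i} f(X_n^i + Y_n^i) − E_{P_i} f(X^i)|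 → 0 as n → ∞. -/
open MeasureTheory Filter

lemma aux_integrable {Ω : Type*} [MeasurableSpace Ω] (μ : Measure Ω) [IsProbabilityMeasure μ]
    {f : ℝ → ℝ} {K : NNReal} (hf : LipschitzWith K f) {Cf : ℝ} (hCf : ∀ x, |f x| ≤ Cf)
    {g : Ω → ℝ} (hg : Measurable g) : Integrable (fun ω => f (g ω)) μ := by
  refine Integrable.mono' (integrable_const Cf)
    ((hf.continuous.measurable.comp hg).aestronglyMeasurable) ?_
  filter_upwards with ω using (by simpa using hCf (g ω))

lemma aux_bound {Ω : Type*} [MeasurableSpace Ω] (μ : Measure Ω) [IsProbabilityMeasure μ]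
    {f : ℝ → ℝ} {K : NNReal} (hf : LipschitzWith K f) {Cf : ℝ} (hCf : ∀ x, |f x| ≤ Cf)
    {Xg Yg : Ω → ℝ} (hX : Measurable Xg) (hYg : Measurable Yg) {ε : ℝ} (hε : 0 < ε) :
    |(∫ ω, f (Xg ω + Yg ω) ∂μ) - ∫ ω, f (Xg ω) ∂μ|
      ≤ K * ε + 2 * Cf * (μ {ω | ε < |Yg ω|}).toReal := by
  have hCf0 : 0 ≤ Cf := le_trans (abs_nonneg _) (hCf 0)
  set S : Set Ω := {ω | ε < |Yg ω|} with hSdef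
  have hS : MeasurableSet S := measurableSet_lt measurable_const hYg.abs
  have hI1 : Integrable (fun ω => f (Xg ω + Yg ω)) μ := aux_integrable μ hf hCf (hX.add hYg)
  have hI2 : Integrable (fun ω => f (Xg ω)) μ := aux_integrable μ hf hCf hX
  rw [← integral_sub hI1 hI2]
  have h1 : |∫ ω, (f (Xg ω + Yg ω) - f (Xg ω)) ∂μ|
      ≤ ∫ ω, |f (Xg ω + Yg ω) - f (Xg ω)| ∂μ := by
    simpa [Real.norm_eq_abs] using
      norm_integral_le_integral_norm (f := fun ω => f (Xg ω + Yg ω) - f (Xg ω)) (μ := μ)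
  refine h1.trans ?_
  have hIh : Integrable (fun ω => (K : ℝ) * ε + S.indicator (fun _ => 2 * Cf) ω) μ :=
    (integrable_const _).add ((integrable_const _).indicator hS)
  have hmono : ∫ ω, |f (Xg ω + Yg ω) - f (Xg ω)| ∂μ
      ≤ ∫ ω, ((K : ℝ) * ε + S.indicator (fun _ => 2 * Cf) ω) ∂μ := by
    refine integral_mono (hI1.sub hI2).abs hIh ?_
    intro ω
    by_cases hω : ω ∈ S
    · have : |f (Xg ω + Yg ω) - f (Xg ω)| ≤ 2 * Cf := by
        have := hCf (Xg ω + Yg ω); have := hCf (Xg ω)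
        rw [abs_le] at *; constructor <;> nlinarith [abs_nonneg (Yg ω)]
      simp only [Set.indicator_of_mem hω]
      have hK : 0 ≤ (K : ℝ) * ε := mul_nonneg K.2 hε.le
      linarith
    · have hYω : |Yg ω| ≤ ε := not_lt.1 hω
      have : |f (Xg ω + Yg ω) - f (Xg ω)| ≤ (K : ℝ) * |Yg ω| := by
        have := hf.dist_le_mul (Xg ω + Yg ω) (Xg ω)
        simpa [Real.dist_eq, abs_sub_comm] using this
      have : |f (Xg ω + Yg ω) - f (Xg ω)| ≤ (K : ℝ) * ε :=
        this.trans (by exact mul_le_mul_of_nonneg_left hYω K.2)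
      simp only [Set.indicator_of_notMem hω]
      linarith
  refine hmono.trans ?_
  rw [integral_add (integrable_const _) ((integrable_const _).indicator hS),
    integral_const, integral_indicator_const _ hS]
  simp [smul_eq_mul, mul_comm]
  exact le_rfl
lemma aux_abs_int {Ω : Type*} [MeasurableSpace Ω] (μ : Measure Ω) [IsProbabilityMeasure μ]
    {f : ℝ → ℝ} {K : NNReal} (hf : LipschitzWith K f) {Cf : ℝ} (hCf : ∀ x, |f x| ≤ Cf)
    {g : Ω → ℝ} (hg : Measurable g) : |∫ ω, f (g ω) ∂μ| ≤ Cf := by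
  have h1 : |∫ ω, f (g ω) ∂μ| ≤ ∫ ω, |f (g ω)| ∂μ := by
    simpa [Real.norm_eq_abs] using
      norm_integral_le_integral_norm (f := fun ω => f (g ω)) (μ := μ)
  refine h1.trans ?_
  have := integral_mono (aux_integrable μ hf hCf hg).abs (integrable_const Cf)
    (fun ω => hCf (g ω))
  simpa using this

/-- uniform Slutsky lemma: if `X_n` converges uniformly in distribution
to `X` over the family of probability spaces `(Ω_i, P_i)` (tested against bounded
Lipschitz functions) and `Y_n → 0` uniformly in probability over the family, then
`X_n + Y_n` converges uniformly in distribution to `X` over the family. -/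
theorem uniform_slutsky {ι : Type*} {Ωf : ι → Type*} [∀ i, MeasurableSpace (Ωf i)]
    (P : ∀ i, Measure (Ωf i)) [∀ i, IsProbabilityMeasure (P i)]
    (X Y : ℕ → ∀ i, Ωf i → ℝ) (Xlim : ∀ i, Ωf i → ℝ)
    (hXmeas : ∀ n i, Measurable (X n i)) (hYmeas : ∀ n i, Measurable (Y n i))
    (hXlimmeas : ∀ i, Measurable (Xlim i))
    (hXd : ∀ f : ℝ → ℝ, ∀ K : NNReal, LipschitzWith K f →
      ∀ Cf : ℝ, (∀ x : ℝ, |f x| ≤ Cf) →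
      Tendsto (fun n => ⨆ i : ι,
          |(∫ ω, f (X n i ω) ∂(P i)) - ∫ ω, f (Xlim i ω) ∂(P i)|) atTop (nhds (0 : ℝ)))
    (hY : ∀ ε > (0 : ℝ),
      Tendsto (fun n => ⨆ i : ι, P i {ω | ε < |Y n i ω|}) atTop (nhds (0 : ENNReal))) :
    ∀ f : ℝ → ℝ, ∀ K : NNReal, LipschitzWith K f →
      ∀ Cf : ℝ, (∀ x : ℝ, |f x| ≤ Cf) →
      Tendsto (fun n => ⨆ i : ι,
          |(∫ ω, f (X n i ω + Y n i ω) ∂(P i)) - ∫ ω, f (Xlim i ω) ∂(P i)|) atTop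
        (nhds (0 : ℝ)) := by
  intro f K hf Cf hCf
  have hCf0 : 0 ≤ Cf := le_trans (abs_nonneg _) (hCf 0)
  set T : ℕ → ℝ := fun n => ⨆ i : ι,
    |(∫ ω, f (X n i ω) ∂(P i)) - ∫ ω, f (Xlim i ω) ∂(P i)| with hTdef
  have hT : Tendsto T atTop (nhds 0) := hXd f K hf Cf hCf
  rw [Metric.tendsto_atTop]
  intro δ hδ
  set ε : ℝ := δ / (3 * ((K : ℝ) + 1)) with hεdef
  have hε : 0 < ε := by positivity
  set c : ℝ := δ / (3 * (2 * Cf + 1)) with hcdef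
  have hc : 0 < c := by positivity
  have ev1 : ∀ᶠ n in atTop, T n < δ / 3 :=
    hT.eventually_lt_const (by linarith)
  have ev2 : ∀ᶠ n in atTop,
      (⨆ i : ι, P i {ω | ε < |Y n i ω|}) < ENNReal.ofReal c :=
    (hY ε hε).eventually_lt_const (ENNReal.ofReal_pos.2 hc)
  rcases eventually_atTop.1 (ev1.and ev2) with ⟨N, hN⟩
  refine ⟨N, fun n hn => ?_⟩
  obtain ⟨h1, h2⟩ := hN n hn
  set Q : ENNReal := ⨆ i : ι, P i {ω | ε < |Y n i ω|} with hQdef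
  have hQtop : Q ≠ ⊤ := by
    refine ne_top_of_le_ne_top (by simp : (1 : ENNReal) ≠ ⊤) ?_
    exact iSup_le fun i => prob_le_one
  have hQlt : Q.toReal < c := by
    rw [← ENNReal.ofReal_toReal hQtop] at h2
    exact (ENNReal.ofReal_lt_ofReal_iff hc).1 h2
  -- per-index bound
  have hTnonneg : 0 ≤ T n := Real.iSup_nonneg fun i => abs_nonneg _
  have hbound : (⨆ i : ι,
      |(∫ ω, f (X n i ω + Y n i ω) ∂(P i)) - ∫ ω, f (Xlim i ω) ∂(P i)|)
      ≤ (K : ℝ) * ε + 2 * Cf * Q.toReal + T n := by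
    refine Real.iSup_le (fun i => ?_) (by positivity)
    have hA : |(∫ ω, f (X n i ω + Y n i ω) ∂(P i)) - ∫ ω, f (Xlim i ω) ∂(P i)|
        ≤ |(∫ ω, f (X n i ω + Y n i ω) ∂(P i)) - ∫ ω, f (X n i ω) ∂(P i)|
          + |(∫ ω, f (X n i ω) ∂(P i)) - ∫ ω, f (Xlim i ω) ∂(P i)| := by
      exact abs_sub_le _ _ _
    refine hA.trans ?_
    have hB := aux_bound (P i) hf hCf (hXmeas n i) (hYmeas n i) hε
    have hQi : (P i {ω | ε < |Y n i ω|}).toReal ≤ Q.toReal :=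
      ENNReal.toReal_mono hQtop (le_iSup (fun i => P i {ω | ε < |Y n i ω|}) i)
    have hTi : |(∫ ω, f (X n i ω) ∂(P i)) - ∫ ω, f (Xlim i ω) ∂(P i)| ≤ T n := by
      refine le_ciSup (f := fun j : ι =>
        |(∫ ω, f (X n j ω) ∂(P j)) - ∫ ω, f (Xlim j ω) ∂(P j)|) ⟨2 * Cf, ?_⟩ i
      rintro _ ⟨j, rfl⟩
      have := abs_sub (∫ ω, f (X n j ω) ∂(P j)) (∫ ω, f (Xlim j ω) ∂(P j))
      have ha := aux_abs_int (P j) hf hCf (hXmeas n j)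
      have hb := aux_abs_int (P j) hf hCf (hXlimmeas j)
      calc |(∫ ω, f (X n j ω) ∂(P j)) - ∫ ω, f (Xlim j ω) ∂(P j)|
          ≤ |∫ ω, f (X n j ω) ∂(P j)| + |∫ ω, f (Xlim j ω) ∂(P j)| := abs_sub _ _
        _ ≤ 2 * Cf := by linarith
    nlinarith [hCf0, hQi, hB, hTi]
  rw [Real.dist_eq, sub_zero,
    abs_of_nonneg (Real.iSup_nonneg fun i => abs_nonneg _)]
  have hKε : (K : ℝ) * ε ≤ δ / 3 := by
    rw [hεdef, show (K : ℝ) * (δ / (3 * ((K : ℝ) + 1)))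
        = ((K : ℝ) * δ) / (3 * ((K : ℝ) + 1)) by ring,
      div_le_div_iff₀ (by positivity) (by norm_num : (0:ℝ) < 3)]
    nlinarith [K.2, hδ.le]
  have hCfQ : 2 * Cf * Q.toReal < δ / 3 := by
    have hQ0 : 0 ≤ Q.toReal := ENNReal.toReal_nonneg
    have h3 : 2 * Cf * Q.toReal ≤ 2 * Cf * c := by nlinarith
    have h4 : 2 * Cf * c < δ / 3 := by
      rw [hcdef, show 2 * Cf * (δ / (3 * (2 * Cf + 1)))
          = (2 * Cf * δ) / (3 * (2 * Cf + 1)) by ring,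
        div_lt_div_iff₀ (by positivity) (by norm_num : (0:ℝ) < 3)]
      nlinarith
    linarith
  calc (⨆ i : ι, |(∫ ω, f (X n i ω + Y n i ω) ∂(P i)) - ∫ ω, f (Xlim i ω) ∂(P i)|)
      ≤ (K : ℝ) * ε + 2 * Cf * Q.toReal + T n := hbound
    _ < δ / 3 + δ / 3 + δ / 3 := by linarith
    _ = δ := by ring
end
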